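/- Fix n ≥ 1, a twice continuously differentiable vector field f : ℝ^D → ℝ^D, a continuously differentiable vector field f₁ : ℝ^D → ℝ^D, and θ₀ ∈ ℝ^D. Then there exist C > 0 and h₀ > 0 such that for every h ∈ (0, h₀) and every solution φ : [0, n h] → ℝ^D of the modified flow φ′(t) = f(φ(t)) + n h f₁(φ(t)) with φ(0) = θ₀, one has ‖φ(n h) − ( θ₀ + n h f(θ₀) + n² h² ( f₁(θ₀) + ½ Df(θ₀)[f(θ₀)] ) )‖ ≤ C h³, where Df(θ₀) denotes the Fréchet derivative (Jacobian) of f at θ₀. -/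

import Mathlib

set_option maxHeartbeats 4000000 in
/-- A solution of the modified flow `φ' = f(φ) + n h f₁(φ)` started at `θ₀` satisfies
`φ(nh) = θ₀ + n h f(θ₀) + n² h² (f₁(θ₀) + ½ Df(θ₀)[f(θ₀)]) + O(h³)`. -/
theorem modified_flow_expansion {D n : ℕ} (hn : 1 ≤ n)
    (f f₁ : EuclideanSpace ℝ (Fin D) → EuclideanSpace ℝ (Fin D))
    (hf : ContDiff ℝ 2 f) (hf₁ : ContDiff ℝ 1 f₁)
    (θ₀ : EuclideanSpace ℝ (Fin D)) :
    ∃ C > (0 : ℝ), ∃ h₀ > (0 : ℝ), ∀ h ∈ Set.Ioo (0 : ℝ) h₀,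
      ∀ φ : ℝ → EuclideanSpace ℝ (Fin D),
        φ 0 = θ₀ →
        (∀ t ∈ Set.Icc (0 : ℝ) ((n : ℝ) * h),
          HasDerivAt φ (f (φ t) + ((n : ℝ) * h) • f₁ (φ t)) t) →
        ‖φ ((n : ℝ) * h)
            - (θ₀ + ((n : ℝ) * h) • f θ₀
                + ((n : ℝ) ^ 2 * h ^ 2) •
                    (f₁ θ₀ + (1 / 2 : ℝ) • fderiv ℝ f θ₀ (f θ₀)))‖
          ≤ C * h ^ 3 := by
  classical
  set B : Set (EuclideanSpace ℝ (Fin D)) := Metric.closedBall θ₀ 1 with hBdef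
  have hBconv : Convex ℝ B := convex_closedBall _ _
  have hBcomp : IsCompact B := isCompact_closedBall _ _
  have hθ₀B : θ₀ ∈ B := Metric.mem_closedBall_self zero_le_one
  -- differentiability facts
  have hfd : Differentiable ℝ f := hf.differentiable two_ne_zero
  have hf₁d : Differentiable ℝ f₁ := hf₁.differentiable one_ne_zero
  have hf' : ContDiff ℝ 1 (fderiv ℝ f) := hf.fderiv_right (by norm_num)
  have hf'd : Differentiable ℝ (fderiv ℝ f) := hf'.differentiable one_ne_zero
  -- bounds on the compact ball
  obtain ⟨M₀, hM₀⟩ := hBcomp.exists_bound_of_continuousOn hfd.continuous.continuousOn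
  obtain ⟨M₁, hM₁⟩ := hBcomp.exists_bound_of_continuousOn hf₁d.continuous.continuousOn
  obtain ⟨L₀, hL₀⟩ := hBcomp.exists_bound_of_continuousOn
    (hf'.continuous).continuousOn
  obtain ⟨L₁, hL₁⟩ := hBcomp.exists_bound_of_continuousOn
    (hf₁.continuous_fderiv one_ne_zero).continuousOn
  obtain ⟨K₀, hK₀⟩ := hBcomp.exists_bound_of_continuousOn
    (hf'.continuous_fderiv one_ne_zero).continuousOn
  set M : ℝ := |M₀| + |M₁| + 1 with hMdef
  set L : ℝ := |L₀| + |L₁| + 1 with hLdef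
  set K : ℝ := |K₀| + 1 with hKdef
  have hM1 : (1 : ℝ) ≤ M := by
    have := abs_nonneg M₀; have := abs_nonneg M₁; rw [hMdef]; linarith
  have hL1 : (1 : ℝ) ≤ L := by
    have := abs_nonneg L₀; have := abs_nonneg L₁; rw [hLdef]; linarith
  have hK1 : (1 : ℝ) ≤ K := by
    have := abs_nonneg K₀; rw [hKdef]; linarith
  have hMpos : (0 : ℝ) < M := by linarith
  have hLpos : (0 : ℝ) < L := by linarith
  have hKpos : (0 : ℝ) < K := by linarith
  have hMf : ∀ x ∈ B, ‖f x‖ ≤ M := fun x hx =>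
    (hM₀ x hx).trans (by simp only [hMdef]; cases abs_cases M₀ <;> cases abs_cases M₁ <;> linarith)
  have hMf₁ : ∀ x ∈ B, ‖f₁ x‖ ≤ M := fun x hx =>
    (hM₁ x hx).trans (by simp only [hMdef]; cases abs_cases M₀ <;> cases abs_cases M₁ <;> linarith)
  have hLf : ∀ x ∈ B, ‖fderiv ℝ f x‖ ≤ L := fun x hx =>
    (hL₀ x hx).trans (by simp only [hLdef]; cases abs_cases L₀ <;> cases abs_cases L₁ <;> linarith)
  have hLf₁ : ∀ x ∈ B, ‖fderiv ℝ f₁ x‖ ≤ L := fun x hx =>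
    (hL₁ x hx).trans (by simp only [hLdef]; cases abs_cases L₀ <;> cases abs_cases L₁ <;> linarith)
  have hKf : ∀ x ∈ B, ‖fderiv ℝ (fderiv ℝ f) x‖ ≤ K := fun x hx =>
    (hK₀ x hx).trans (by simp only [hKdef]; cases abs_cases K₀ <;> linarith)
  -- Lipschitz estimates on the ball
  have hLipf : ∀ x ∈ B, ∀ y ∈ B, ‖f x - f y‖ ≤ L * ‖x - y‖ := fun x hx y hy =>
    hBconv.norm_image_sub_le_of_norm_fderiv_le (fun z _ => hfd z) hLf hy hx
  have hLipf₁ : ∀ x ∈ B, ∀ y ∈ B, ‖f₁ x - f₁ y‖ ≤ L * ‖x - y‖ := fun x hx y hy =>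
    hBconv.norm_image_sub_le_of_norm_fderiv_le (fun z _ => hf₁d z) hLf₁ hy hx
  have hLipDf : ∀ x ∈ B, ∀ y ∈ B, ‖fderiv ℝ f x - fderiv ℝ f y‖ ≤ K * ‖x - y‖ :=
    fun x hx y hy =>
    hBconv.norm_image_sub_le_of_norm_fderiv_le (fun z _ => hf'd z) hKf hy hx
  -- quadratic Taylor estimate
  have hTay : ∀ x ∈ B, ‖f x - f θ₀ - fderiv ℝ f θ₀ (x - θ₀)‖ ≤ K * ‖x - θ₀‖ ^ 2 := by
    intro x hx
    have hseg : segment ℝ θ₀ x ⊆ B := hBconv.segment_subset hθ₀B hx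
    have hsegnorm : ∀ y ∈ segment ℝ θ₀ x, ‖y - θ₀‖ ≤ ‖x - θ₀‖ := by
      rintro y ⟨a, b, ha, hb, hab, rfl⟩
      have : a • θ₀ + b • x - θ₀ = b • (x - θ₀) := by
        have ha' : a = 1 - b := by linarith
        rw [ha']; module
      rw [this, norm_smul, Real.norm_eq_abs, abs_of_nonneg hb]
      nlinarith [norm_nonneg (x - θ₀)]
    have hmvt := (convex_segment θ₀ x).norm_image_sub_le_of_norm_hasFDerivWithin_le
      (f := fun y => f y - fderiv ℝ f θ₀ y)
      (f' := fun y => fderiv ℝ f y - fderiv ℝ f θ₀)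
      (C := K * ‖x - θ₀‖)
      (fun y hy => ((hfd y).hasFDerivAt.sub (fderiv ℝ f θ₀).hasFDerivAt).hasFDerivWithinAt)
      (fun y hy => by
        calc ‖fderiv ℝ f y - fderiv ℝ f θ₀‖ ≤ K * ‖y - θ₀‖ := hLipDf y (hseg hy) θ₀ hθ₀B
        _ ≤ K * ‖x - θ₀‖ := by
            have := hsegnorm y hy
            nlinarith
      )
      (left_mem_segment ℝ θ₀ x) (right_mem_segment ℝ θ₀ x)
    have heq : (f x - fderiv ℝ f θ₀ x) - (f θ₀ - fderiv ℝ f θ₀ θ₀)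
        = f x - f θ₀ - fderiv ℝ f θ₀ (x - θ₀) := by
      rw [map_sub]; abel
    rw [heq] at hmvt
    calc ‖f x - f θ₀ - fderiv ℝ f θ₀ (x - θ₀)‖ ≤ K * ‖x - θ₀‖ * ‖x - θ₀‖ := hmvt
      _ = K * ‖x - θ₀‖ ^ 2 := by ring
  -- the constants
  set Cψ : ℝ := 4 * K * M ^ 2 + L * (2 * L * M + M) + 2 * L * M with hCψdef
  have hCψpos : 0 < Cψ := by
    rw [hCψdef]
    nlinarith [mul_pos hKpos (mul_pos hMpos hMpos), mul_pos hLpos hMpos,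
      mul_pos hLpos (mul_pos hLpos hMpos)]
  have hnpos : (0 : ℝ) < n := by exact_mod_cast hn
  have h4M : (0 : ℝ) < 4 * M := by linarith
  refine ⟨Cψ * (n : ℝ) ^ 3, mul_pos hCψpos (pow_pos hnpos 3),
    ((n : ℝ) * (4 * M))⁻¹, inv_pos.2 (mul_pos hnpos h4M), ?_⟩
  rintro h ⟨hh0, hhlt⟩ φ hφ0 hφ'
  set τ : ℝ := (n : ℝ) * h with hτdef
  have hτpos : 0 < τ := by positivity
  have hτsmall : 4 * M * τ < 1 := by
    have h1 : τ < (n : ℝ) * ((n : ℝ) * (4 * M))⁻¹ :=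
      (mul_lt_mul_iff_right₀ hnpos).2 hhlt
    have h2 : (n : ℝ) * ((n : ℝ) * (4 * M))⁻¹ = (4 * M)⁻¹ := by
      field_simp
    rw [h2] at h1
    have h3 : 4 * M * τ < 4 * M * (4 * M)⁻¹ := (mul_lt_mul_iff_right₀ h4M).2 h1
    rwa [mul_inv_cancel₀ (ne_of_gt h4M)] at h3
  have hτ1 : τ ≤ 1 := by nlinarith
  have hMτ : 2 * M * τ < 1 / 2 := by nlinarith
  have hφc : ContinuousOn φ (Set.Icc 0 τ) := fun t ht =>
    (hφ' t ht).continuousAt.continuousWithinAt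
  -- Step A : the solution stays in the ball
  have stayA : ∀ t ∈ Set.Icc (0 : ℝ) τ, ‖φ t - θ₀‖ ≤ 1 / 2 := by
    by_contra hcon
    push_neg at hcon
    obtain ⟨t₁, ht₁, hgt⟩ := hcon
    set Ebad : Set ℝ :=
      Set.Icc 0 τ ∩ (fun t => ‖φ t - θ₀‖) ⁻¹' Set.Ici (1 / 2) with hEdef
    have hEclosed : IsClosed Ebad :=
      ContinuousOn.preimage_isClosed_of_isClosed
        ((hφc.sub continuousOn_const).norm) isClosed_Icc isClosed_Ici
    have hEcomp : IsCompact Ebad :=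
      isCompact_Icc.of_isClosed_subset hEclosed Set.inter_subset_left
    have hEne : Ebad.Nonempty := ⟨t₁, ht₁, le_of_lt hgt⟩
    set T := sInf Ebad with hTdef
    have hTmem : T ∈ Ebad := hEcomp.sInf_mem hEne
    obtain ⟨hTicc, hTge⟩ := hTmem
    have hTge' : (1 : ℝ) / 2 ≤ ‖φ T - θ₀‖ := hTge
    have hT0 : 0 ≤ T := hTicc.1
    -- derivative bound before time T
    have hbound : ∀ s ∈ Set.Ico (0 : ℝ) T, ‖f (φ s) + τ • f₁ (φ s)‖ ≤ 2 * M := by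
      intro s hs
      have hsicc : s ∈ Set.Icc (0 : ℝ) τ := ⟨hs.1, hs.2.le.trans hTicc.2⟩
      have hsnot : s ∉ Ebad := fun hmem => absurd (csInf_le hEcomp.bddBelow hmem) (not_le.2 hs.2)
      have hslt : ‖φ s - θ₀‖ < 1 / 2 := by
        by_contra hge
        exact hsnot ⟨hsicc, le_of_not_gt hge⟩
      have hsB : φ s ∈ B := by
        rw [hBdef, Metric.mem_closedBall, dist_eq_norm]
        linarith
      calc ‖f (φ s) + τ • f₁ (φ s)‖ ≤ ‖f (φ s)‖ + ‖τ • f₁ (φ s)‖ := norm_add_le _ _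
        _ ≤ M + τ * M := by
            have h1 := hMf _ hsB
            have h2 := hMf₁ _ hsB
            have : ‖τ • f₁ (φ s)‖ = τ * ‖f₁ (φ s)‖ := by
              rw [norm_smul, Real.norm_eq_abs, abs_of_pos hτpos]
            nlinarith
        _ ≤ 2 * M := by nlinarith
    have hmvt := norm_image_sub_le_of_norm_deriv_le_segment'
      (f := φ) (f' := fun t => f (φ t) + τ • f₁ (φ t)) (a := 0) (b := T) (C := 2 * M)
      (fun s hs => (hφ' s ⟨hs.1, hs.2.trans hTicc.2⟩).hasDerivWithinAt)
      hbound T (Set.right_mem_Icc.2 hT0)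
    rw [hφ0] at hmvt
    have : ‖φ T - θ₀‖ ≤ 2 * M * τ := by
      calc ‖φ T - θ₀‖ ≤ 2 * M * (T - 0) := hmvt
        _ ≤ 2 * M * τ := by nlinarith [hTicc.2]
    linarith
  have hinB : ∀ t ∈ Set.Icc (0 : ℝ) τ, φ t ∈ B := by
    intro t ht
    have := stayA t ht
    rw [hBdef, Metric.mem_closedBall, dist_eq_norm]
    linarith
  -- Step A' : linear bound
  have hlin : ∀ t ∈ Set.Icc (0 : ℝ) τ, ‖φ t - θ₀‖ ≤ 2 * M * t := by
    have hbound : ∀ s ∈ Set.Ico (0 : ℝ) τ, ‖f (φ s) + τ • f₁ (φ s)‖ ≤ 2 * M := by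
      intro s hs
      have hsB := hinB s ⟨hs.1, hs.2.le⟩
      calc ‖f (φ s) + τ • f₁ (φ s)‖ ≤ ‖f (φ s)‖ + ‖τ • f₁ (φ s)‖ := norm_add_le _ _
        _ ≤ M + τ * M := by
            have h1 := hMf _ hsB
            have h2 := hMf₁ _ hsB
            have : ‖τ • f₁ (φ s)‖ = τ * ‖f₁ (φ s)‖ := by
              rw [norm_smul, Real.norm_eq_abs, abs_of_pos hτpos]
            nlinarith
        _ ≤ 2 * M := by nlinarith
    intro t ht
    have hmvt := norm_image_sub_le_of_norm_deriv_le_segment'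
      (f := φ) (f' := fun t => f (φ t) + τ • f₁ (φ t)) (a := 0) (b := τ) (C := 2 * M)
      (fun s hs => (hφ' s hs).hasDerivWithinAt) hbound t ht
    rw [hφ0] at hmvt
    calc ‖φ t - θ₀‖ ≤ 2 * M * (t - 0) := hmvt
      _ = 2 * M * t := by ring
  -- Step B : second order bound
  have hB2 : ∀ t ∈ Set.Icc (0 : ℝ) τ, ‖φ t - θ₀ - t • f θ₀‖ ≤ (2 * L * M + M) * τ * t := by
    have hder : ∀ t ∈ Set.Icc (0 : ℝ) τ,
        HasDerivWithinAt (fun s => φ s - θ₀ - s • f θ₀)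
          (f (φ t) + τ • f₁ (φ t) - f θ₀) (Set.Icc 0 τ) t := by
      intro t ht
      have h1 : HasDerivAt (fun s : ℝ => s • f θ₀) (f θ₀) t := by
        simpa using (hasDerivAt_id t).smul_const (f θ₀)
      exact (((hφ' t ht).sub_const θ₀).sub h1).hasDerivWithinAt
    have hbound : ∀ s ∈ Set.Ico (0 : ℝ) τ,
        ‖f (φ s) + τ • f₁ (φ s) - f θ₀‖ ≤ (2 * L * M + M) * τ := by
      intro s hs
      have hsicc : s ∈ Set.Icc (0 : ℝ) τ := ⟨hs.1, hs.2.le⟩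
      have hsB := hinB s hsicc
      have h1 : ‖f (φ s) - f θ₀‖ ≤ L * (2 * M * s) := by
        calc ‖f (φ s) - f θ₀‖ ≤ L * ‖φ s - θ₀‖ := hLipf _ hsB _ hθ₀B
          _ ≤ L * (2 * M * s) := by nlinarith [hlin s hsicc, norm_nonneg (φ s - θ₀)]
      have h2 : ‖τ • f₁ (φ s)‖ ≤ τ * M := by
        rw [norm_smul, Real.norm_eq_abs, abs_of_pos hτpos]
        nlinarith [hMf₁ _ hsB, norm_nonneg (f₁ (φ s))]
      calc ‖f (φ s) + τ • f₁ (φ s) - f θ₀‖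
          = ‖(f (φ s) - f θ₀) + τ • f₁ (φ s)‖ := by rw [add_sub_right_comm]
        _ ≤ ‖f (φ s) - f θ₀‖ + ‖τ • f₁ (φ s)‖ := norm_add_le _ _
        _ ≤ L * (2 * M * s) + τ * M := by linarith
        _ ≤ (2 * L * M + M) * τ := by
            nlinarith [mul_nonneg (mul_nonneg hLpos.le hMpos.le) (sub_nonneg.2 hs.2.le)]
    intro t ht
    have hmvt := norm_image_sub_le_of_norm_deriv_le_segment' hder hbound t ht
    have h0 : φ 0 - θ₀ - (0:ℝ) • f θ₀ = 0 := by simp [hφ0]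
    rw [h0, sub_zero, sub_zero] at hmvt
    exact hmvt
  -- Step C : third order bound via ψ
  set w : EuclideanSpace ℝ (Fin D) := fderiv ℝ f θ₀ (f θ₀) with hwdef
  set ψ : ℝ → EuclideanSpace ℝ (Fin D) :=
    fun t => φ t - θ₀ - t • f θ₀ - (t * τ) • f₁ θ₀ - (t ^ 2 / 2) • w with hψdef
  have hψder : ∀ t ∈ Set.Icc (0 : ℝ) τ,
      HasDerivWithinAt ψ
        (f (φ t) + τ • f₁ (φ t) - f θ₀ - τ • f₁ θ₀ - t • w) (Set.Icc 0 τ) t := by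
    intro t ht
    have h1 : HasDerivAt (fun s : ℝ => s • f θ₀) (f θ₀) t := by
      simpa using (hasDerivAt_id t).smul_const (f θ₀)
    have h2 : HasDerivAt (fun s : ℝ => (s * τ) • f₁ θ₀) (τ • f₁ θ₀) t := by
      simpa using ((hasDerivAt_id t).mul_const τ).smul_const (f₁ θ₀)
    have h3 : HasDerivAt (fun s : ℝ => (s ^ 2 / 2) • w) (t • w) t := by
      have := ((hasDerivAt_pow 2 t).div_const 2).smul_const w
      simpa [mul_comm] using this
    exact (((((hφ' t ht).sub_const θ₀).sub h1).sub h2).sub h3).hasDerivWithinAt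
  have hψbound : ∀ t ∈ Set.Ico (0 : ℝ) τ,
      ‖f (φ t) + τ • f₁ (φ t) - f θ₀ - τ • f₁ θ₀ - t • w‖ ≤ Cψ * τ ^ 2 := by
    intro t ht
    have hticc : t ∈ Set.Icc (0 : ℝ) τ := ⟨ht.1, ht.2.le⟩
    have htB := hinB t hticc
    have key : f (φ t) + τ • f₁ (φ t) - f θ₀ - τ • f₁ θ₀ - t • w
        = (f (φ t) - f θ₀ - fderiv ℝ f θ₀ (φ t - θ₀))
          + fderiv ℝ f θ₀ (φ t - θ₀ - t • f θ₀)
          + τ • (f₁ (φ t) - f₁ θ₀) := by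
      have e1 : fderiv ℝ f θ₀ (φ t - θ₀ - t • f θ₀)
          = fderiv ℝ f θ₀ (φ t - θ₀) - t • w := by
        rw [map_sub, map_smul, hwdef]
      rw [e1]
      module
    rw [key]
    have ht2 : ‖φ t - θ₀‖ ≤ 2 * M * τ := by
      have h1 := hlin t hticc
      nlinarith [mul_nonneg (mul_nonneg (by norm_num : (0:ℝ) ≤ 2) hMpos.le)
        (sub_nonneg.2 hticc.2)]
    have b1 : ‖f (φ t) - f θ₀ - fderiv ℝ f θ₀ (φ t - θ₀)‖ ≤ 4 * K * M ^ 2 * τ ^ 2 := by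
      calc ‖f (φ t) - f θ₀ - fderiv ℝ f θ₀ (φ t - θ₀)‖ ≤ K * ‖φ t - θ₀‖ ^ 2 := hTay _ htB
        _ ≤ K * (2 * M * τ) ^ 2 :=
            mul_le_mul_of_nonneg_left (pow_le_pow_left₀ (norm_nonneg _) ht2 2) hKpos.le
        _ = 4 * K * M ^ 2 * τ ^ 2 := by ring
    have b2 : ‖fderiv ℝ f θ₀ (φ t - θ₀ - t • f θ₀)‖ ≤ L * ((2 * L * M + M) * τ ^ 2) := by
      calc ‖fderiv ℝ f θ₀ (φ t - θ₀ - t • f θ₀)‖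
          ≤ ‖fderiv ℝ f θ₀‖ * ‖φ t - θ₀ - t • f θ₀‖ := (fderiv ℝ f θ₀).le_opNorm _
        _ ≤ L * ((2 * L * M + M) * τ * t) :=
            mul_le_mul (hLf θ₀ hθ₀B) (hB2 t hticc) (norm_nonneg _) hLpos.le
        _ ≤ L * ((2 * L * M + M) * τ * τ) := by
            have hc : (0 : ℝ) ≤ (2 * L * M + M) * τ := by
              apply mul_nonneg _ hτpos.le
              nlinarith [mul_pos hLpos hMpos]
            exact mul_le_mul_of_nonneg_left
              (mul_le_mul_of_nonneg_left hticc.2 hc) hLpos.le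
        _ = L * ((2 * L * M + M) * τ ^ 2) := by ring
    have b3 : ‖τ • (f₁ (φ t) - f₁ θ₀)‖ ≤ 2 * L * M * τ ^ 2 := by
      rw [norm_smul, Real.norm_eq_abs, abs_of_pos hτpos]
      have h1 : ‖f₁ (φ t) - f₁ θ₀‖ ≤ L * (2 * M * τ) := by
        calc ‖f₁ (φ t) - f₁ θ₀‖ ≤ L * ‖φ t - θ₀‖ := hLipf₁ _ htB _ hθ₀B
          _ ≤ L * (2 * M * τ) := mul_le_mul_of_nonneg_left ht2 hLpos.le
      calc τ * ‖f₁ (φ t) - f₁ θ₀‖ ≤ τ * (L * (2 * M * τ)) :=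
            mul_le_mul_of_nonneg_left h1 hτpos.le
        _ = 2 * L * M * τ ^ 2 := by ring
    calc ‖(f (φ t) - f θ₀ - fderiv ℝ f θ₀ (φ t - θ₀))
          + fderiv ℝ f θ₀ (φ t - θ₀ - t • f θ₀)
          + τ • (f₁ (φ t) - f₁ θ₀)‖
        ≤ ‖(f (φ t) - f θ₀ - fderiv ℝ f θ₀ (φ t - θ₀))
          + fderiv ℝ f θ₀ (φ t - θ₀ - t • f θ₀)‖ + ‖τ • (f₁ (φ t) - f₁ θ₀)‖ :=
          norm_add_le _ _
      _ ≤ ‖f (φ t) - f θ₀ - fderiv ℝ f θ₀ (φ t - θ₀)‖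
          + ‖fderiv ℝ f θ₀ (φ t - θ₀ - t • f θ₀)‖ + ‖τ • (f₁ (φ t) - f₁ θ₀)‖ := by
          have := norm_add_le (f (φ t) - f θ₀ - fderiv ℝ f θ₀ (φ t - θ₀))
            (fderiv ℝ f θ₀ (φ t - θ₀ - t • f θ₀))
          linarith
      _ ≤ Cψ * τ ^ 2 := by rw [hCψdef]; nlinarith [b1, b2, b3]
  have hψ0 : ψ 0 = 0 := by simp [hψdef, hφ0]
  have hψτ : ‖ψ τ‖ ≤ Cψ * τ ^ 2 * τ := by
    have hmvt := norm_image_sub_le_of_norm_deriv_le_segment' hψder hψbound τ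
      (Set.right_mem_Icc.2 hτpos.le)
    rw [hψ0, sub_zero, sub_zero] at hmvt
    exact hmvt
  -- conclude
  have hgoal : φ ((n : ℝ) * h)
      - (θ₀ + ((n : ℝ) * h) • f θ₀
          + ((n : ℝ) ^ 2 * h ^ 2) • (f₁ θ₀ + (1 / 2 : ℝ) • fderiv ℝ f θ₀ (f θ₀)))
      = ψ τ := by
    simp only [hψdef, hτdef, hwdef]
    module
  rw [hgoal]
  calc ‖ψ τ‖ ≤ Cψ * τ ^ 2 * τ := hψτ
    _ = Cψ * (n : ℝ) ^ 3 * h ^ 3 := by rw [hτdef]; ring
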